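/- Assume model (1.1) with p ≥ 3, where in addition E(Z_{jl} Z_{cm}) = U_{jc} V_{lm} for all 1 ≤ j,c ≤ K₁ and 1 ≤ l,m ≤ K₂ (as holds when Z ~ MN(0,U,V)), with V positive semidefinite. Then: (i) for any w ≠ x with w ∈ G_i^{(r)} and x ∈ G_h^{(r)}, if every row cluster contains some index different from w and x, then COD_{Σ_{p,W_O}}(w,x) = (tr(V)/K₂) · max_{1≤l≤K₁} |U_{il} − U_{hl}|; (ii) if moreover every row cluster contains at least two indices and K₁ ≥ 2, then MCOD(Σ_{p,W_O}) = (tr(V)/K₂) · min_{1≤i≠h≤K₁} max_{1≤l≤K₁} |U_{il} − U_{hl}|. -/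

import Mathlib

open MeasureTheory ProbabilityTheory Matrix BigOperators Finset
open scoped Classical

noncomputable section

instance {m n : Type*} : MeasurableSpace (Matrix m n ℝ) :=
  inferInstanceAs (MeasurableSpace (m → n → ℝ))

/-- Entrywise expectation of a random matrix. -/
def matExp {Ω : Type*} [MeasurableSpace Ω] (μ : Measure Ω) {m n : ℕ}
    (X : Ω → Matrix (Fin m) (Fin n) ℝ) : Matrix (Fin m) (Fin n) ℝ :=
  Matrix.of fun i j => ∫ ω, X ω i j ∂μ

/-- A membership matrix: binary, every row has exactly one 1, every column is nonzero. -/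
def IsMembership {p K : ℕ} (A : Matrix (Fin p) (Fin K) ℝ) : Prop :=
  (∀ i k, A i k = 0 ∨ A i k = 1) ∧ (∀ i, ∃! k, A i k = 1) ∧ (∀ k, ∃ i, A i k = 1)

/-- `a` and `b` belong to the same cluster encoded by the membership matrix `A`. -/
def SameCluster {p K : ℕ} (A : Matrix (Fin p) (Fin K) ℝ) (a b : Fin p) : Prop :=
  ∃ k, A a k = 1 ∧ A b k = 1

/-- `COD_Σ(a,b) = max_{c ≠ a,b} |Σ_{ac} − Σ_{bc}|`. -/
def COD {p : ℕ} (S : Matrix (Fin p) (Fin p) ℝ) (a b : Fin p) : ℝ :=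
  ⨆ c : Fin p, ⨆ _ : c ≠ a ∧ c ≠ b, |S a c - S b c|

/-- `MCOD(Σ) = min_{a ≁ b} COD_Σ(a,b)`, the minimum over pairs in different clusters. -/
def MCOD {p : ℕ} (r : Fin p → Fin p → Prop) (S : Matrix (Fin p) (Fin p) ℝ) : ℝ :=
  ⨅ ab : {ab : Fin p × Fin p // ¬ r ab.1 ab.2}, COD S ab.1.1 ab.1.2

/-- Entrywise maximum norm `‖M‖_max = max_{i,j} |M_{ij}|`. -/
def maxNorm {p q : ℕ} (M : Matrix (Fin p) (Fin q) ℝ) : ℝ := ⨆ i, ⨆ j, |M i j|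

/-- Frobenius norm. -/
def frob {m n : ℕ} (M : Matrix (Fin m) (Fin n) ℝ) : ℝ := Real.sqrt (∑ i, ∑ j, (M i j)^2)

/-- Under model (1.1) with matrix-normal-type second moments
`E(Z_{jl} Z_{cm}) = U_{jc} V_{lm}` and `W_O = B(BᵀB)^{-2}Bᵀ/K₂`:
(i) for `w ≠ x` in row clusters `i, h`, if every row cluster contains an index
different from `w` and `x`, then
`COD_{Σ_{p,W_O}}(w,x) = (tr V / K₂) · max_l |U_{il} − U_{hl}|`;
(ii) if every row cluster has at least two indices and `K₁ ≥ 2`, then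
`MCOD(Σ_{p,W_O}) = (tr V / K₂) · min_{i≠h} max_l |U_{il} − U_{hl}|`. -/

lemma membership_exists_fn {p K : ℕ} {A : Matrix (Fin p) (Fin K) ℝ}
    (hA : IsMembership A) :
    ∃ g : Fin p → Fin K, ∀ a k, A a k = if k = g a then 1 else 0 := by
  choose g hg1 hg2 using hA.2.1
  refine ⟨g, fun a k => ?_⟩
  by_cases h : k = g a
  · subst h; simp [hg1]
  · rcases hA.1 a k with h0 | h1
    · simp [h, h0]
    · exact absurd (hg2 a k h1) h

theorem matrix_normal_cod_formula
    {Ω : Type} [MeasurableSpace Ω] (μ : Measure Ω) [IsProbabilityMeasure μ]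
    {p q K₁ K₂ : ℕ} (hp : 3 ≤ p)
    (A : Matrix (Fin p) (Fin K₁) ℝ) (B : Matrix (Fin q) (Fin K₂) ℝ)
    (Z : Ω → Matrix (Fin K₁) (Fin K₂) ℝ) (Γ X : Ω → Matrix (Fin p) (Fin q) ℝ)
    (U : Matrix (Fin K₁) (Fin K₁) ℝ) (V : Matrix (Fin K₂) (Fin K₂) ℝ)
    (hA : IsMembership A) (hB : IsMembership B)
    (hmodel : ∀ ω, X ω = A * Z ω * Bᵀ + Γ ω)
    (hZmeas : Measurable Z) (hΓmeas : Measurable Γ)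
    (hZmean : ∀ j k, ∫ ω, Z ω j k ∂μ = 0)
    (hΓmean : ∀ a b, ∫ ω, Γ ω a b ∂μ = 0)
    (hZcov : ∀ (j c : Fin K₁) (l m : Fin K₂),
        ∫ ω, Z ω j l * Z ω c m ∂μ = U j c * V l m)
    (hΓint : ∀ a b a' b', Integrable (fun ω => Γ ω a b * Γ ω a' b') μ)
    (hZint : ∀ j k j' k', Integrable (fun ω => Z ω j k * Z ω j' k') μ)
    (hZΓint : ∀ j k a b, Integrable (fun ω => Z ω j k * Γ ω a b) μ)
    (hΓindep : iIndepFun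
      (fun (ij : Fin p × Fin q) ω => Γ ω ij.1 ij.2) μ)
    (hindep : IndepFun Z Γ μ)
    (hV : V.PosSemidef) :
    (∀ (w x : Fin p) (i h : Fin K₁), w ≠ x → A w i = 1 → A x h = 1 →
      (∀ k : Fin K₁, ∃ c : Fin p, A c k = 1 ∧ c ≠ w ∧ c ≠ x) →
      COD (matExp μ fun ω =>
          X ω * ((1/(K₂:ℝ)) • (B * ((Bᵀ * B)^2)⁻¹ * Bᵀ)) * (X ω)ᵀ) w x
        = (V.trace / K₂) * ⨆ l : Fin K₁, |U i l - U h l|) ∧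
    ((∀ k : Fin K₁, ∃ c d : Fin p, c ≠ d ∧ A c k = 1 ∧ A d k = 1) → 2 ≤ K₁ →
      MCOD (SameCluster A)
          (matExp μ fun ω =>
            X ω * ((1/(K₂:ℝ)) • (B * ((Bᵀ * B)^2)⁻¹ * Bᵀ)) * (X ω)ᵀ)
        = (V.trace / K₂) *
            ⨅ ih : {ih : Fin K₁ × Fin K₁ // ih.1 ≠ ih.2},
              ⨆ l : Fin K₁, |U ih.1.1 l - U ih.1.2 l|) := by

  obtain ⟨g, hg⟩ := membership_exists_fn hA
  obtain ⟨f, hf⟩ := membership_exists_fn hB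
  have hgA : ∀ a k, A a k = 1 → g a = k := by
    intro a k h
    by_contra hne
    rw [hg, if_neg (fun he => hne he.symm)] at h
    norm_num at h
  have hfB : ∀ a k, B a k = 1 → f a = k := by
    intro a k h
    by_contra hne
    rw [hf, if_neg (fun he => hne he.symm)] at h
    norm_num at h
  haveI hK1ne : Nonempty (Fin K₁) := ⟨g ⟨0, by omega⟩⟩
  set W : Matrix (Fin q) (Fin q) ℝ := (1/(K₂:ℝ)) • (B * ((Bᵀ * B)^2)⁻¹ * Bᵀ) with hWdef
  set Sig : Matrix (Fin p) (Fin p) ℝ :=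
    matExp μ (fun ω => X ω * W * (X ω)ᵀ) with hSigdef
  -- the scalar constant
  set κ : ℝ := V.trace / K₂ with hκdef
  have hdiagV : ∀ l, 0 ≤ V l l := by
    intro l
    exact hV.diag_nonneg
  have hκ : 0 ≤ κ := by
    rw [hκdef]
    exact div_nonneg (Finset.sum_nonneg fun l _ => hdiagV l) (Nat.cast_nonneg _)
  -- matrix algebra: ∑ W s t * V (f s) (f t) = tr V / K₂
  have hc₀ : ∑ s, ∑ t, W s t * V (f s) (f t) = V.trace / K₂ := by
    have hB01 : ∀ s k, B s k * B s k = B s k := by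
      intro s k; rw [hf]; split_ifs <;> norm_num
    have hDdiag : Bᵀ * B = Matrix.diagonal (fun k => ∑ s, B s k) := by
      ext k l
      simp only [Matrix.mul_apply, Matrix.transpose_apply, Matrix.diagonal_apply]
      by_cases h : k = l
      · subst h; simp [hB01]
      · rw [if_neg h]
        apply Finset.sum_eq_zero
        intro s _
        rw [hf, hf]
        split_ifs with h1 h2
        · exact absurd (h1.trans h2.symm) h
        · ring
        · ring
        · ring
    have hDunit : IsUnit (Bᵀ * B).det := by
      rw [hDdiag, Matrix.det_diagonal, isUnit_iff_ne_zero]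
      apply Finset.prod_ne_zero_iff.mpr
      intro k _
      obtain ⟨i, hi⟩ := hB.2.2 k
      have : (0:ℝ) < ∑ s, B s k := by
        apply Finset.sum_pos'
        · intro s _; rw [hf]; split_ifs <;> norm_num
        · exact ⟨i, Finset.mem_univ i, by rw [hi]; norm_num⟩
      exact ne_of_gt this
    have hDD' : ∀ D : Matrix (Fin K₂) (Fin K₂) ℝ, IsUnit D.det → D * ((D^2)⁻¹) * D = 1 := by
      intro D hD
      rw [pow_two, Matrix.mul_inv_rev, Matrix.mul_assoc, Matrix.mul_assoc,
        Matrix.nonsing_inv_mul _ hD, Matrix.mul_one, Matrix.mul_nonsing_inv _ hD]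
    have hDD : (Bᵀ * B) * (((Bᵀ * B)^2)⁻¹) * (Bᵀ * B) = 1 := hDD' _ hDunit
    have hBWB : Bᵀ * W * B = (1/(K₂:ℝ)) • (1 : Matrix (Fin K₂) (Fin K₂) ℝ) := by
      rw [hWdef, Matrix.mul_smul, Matrix.smul_mul]
      congr 1
      calc Bᵀ * (B * ((Bᵀ * B)^2)⁻¹ * Bᵀ) * B
          = (Bᵀ * B) * (((Bᵀ * B)^2)⁻¹) * (Bᵀ * B) := by simp only [Matrix.mul_assoc]
        _ = 1 := hDD
    have h1 : ∀ s t, V (f s) (f t) = (B * V * Bᵀ) s t := by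
      intro s t
      simp only [Matrix.mul_apply, Matrix.transpose_apply, hf]
      simp [Finset.sum_ite_eq, Finset.sum_ite_eq', ite_mul, mul_ite, one_mul, mul_one,
        zero_mul, mul_zero]
    calc ∑ s, ∑ t, W s t * V (f s) (f t)
        = ∑ s, ∑ t, W s t * ((B * V * Bᵀ)ᵀ) t s := by
          simp only [Matrix.transpose_apply]
          exact Finset.sum_congr rfl fun s _ => Finset.sum_congr rfl fun t _ => by rw [h1]
      _ = (W * (B * V * Bᵀ)ᵀ).trace := by
          generalize (B * V * Bᵀ)ᵀ = M
          simp [Matrix.trace, Matrix.diag, Matrix.mul_apply]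
      _ = (W * (B * Vᵀ * Bᵀ)).trace := by
          congr 1
          congr 1
          rw [Matrix.transpose_mul, Matrix.transpose_mul, Matrix.transpose_transpose,
            ← Matrix.mul_assoc]
      _ = ((Bᵀ * W * B) * Vᵀ).trace := by
          rw [show (Bᵀ * W * B) * Vᵀ = Bᵀ * (W * (B * Vᵀ)) by simp only [Matrix.mul_assoc],
            Matrix.trace_mul_comm Bᵀ (W * (B * Vᵀ))]
          simp only [Matrix.mul_assoc]
      _ = V.trace / K₂ := by
          rw [hBWB, Matrix.smul_mul, Matrix.one_mul, Matrix.trace_smul, Matrix.trace_transpose,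
            smul_eq_mul, one_div, inv_mul_eq_div]
  -- measurability of coordinates
  have hZc : ∀ j l, Measurable fun ω => Z ω j l := fun j l =>
    (measurable_pi_apply l).comp ((measurable_pi_apply j).comp hZmeas)
  have hΓc : ∀ a s, Measurable fun ω => Γ ω a s := fun a s =>
    (measurable_pi_apply s).comp ((measurable_pi_apply a).comp hΓmeas)
  -- cross moments vanish
  have hcross : ∀ (j : Fin K₁) (l : Fin K₂) (a : Fin p) (s : Fin q),
      (∫ ω, Z ω j l * Γ ω a s ∂μ = 0) ∧ (∫ ω, Γ ω a s * Z ω j l ∂μ = 0) := by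
    intro j l a s
    have hZΓ : IndepFun (fun ω => Z ω j l) (fun ω => Γ ω a s) μ :=
      hindep.comp (show Measurable fun m : Matrix (Fin K₁) (Fin K₂) ℝ => m j l from
          (measurable_pi_apply l).comp (measurable_pi_apply j))
        (show Measurable fun m : Matrix (Fin p) (Fin q) ℝ => m a s from
          (measurable_pi_apply s).comp (measurable_pi_apply a))
    constructor
    · have h := hZΓ.integral_fun_mul_eq_mul_integral (hZc j l).aestronglyMeasurable (hΓc a s).aestronglyMeasurable
      simpa [Pi.mul_apply, hZmean, hΓmean] using h
    · have h := hZΓ.symm.integral_fun_mul_eq_mul_integral (hΓc a s).aestronglyMeasurable (hZc j l).aestronglyMeasurable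
      simpa [Pi.mul_apply, hZmean, hΓmean] using h
  have hΓΓ : ∀ (a : Fin p) (s : Fin q) (b : Fin p) (t : Fin q), a ≠ b →
      ∫ ω, Γ ω a s * Γ ω b t ∂μ = 0 := by
    intro a s b t hab
    have hne : ((a, s) : Fin p × Fin q) ≠ (b, t) := fun hpp => hab (congrArg Prod.fst hpp)
    have hind := hΓindep.indepFun hne
    have h := IndepFun.integral_fun_mul_eq_mul_integral hind (hΓc a s).aestronglyMeasurable (hΓc b t).aestronglyMeasurable
    simpa [Pi.mul_apply, hΓmean] using h
  -- entries of X
  have hXentry : ∀ ω a s, X ω a s = Z ω (g a) (f s) + Γ ω a s := by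
    intro ω a s
    rw [hmodel]
    simp only [Matrix.add_apply, Matrix.mul_apply, Matrix.transpose_apply, hg, hf]
    simp [Finset.sum_ite_eq, Finset.sum_ite_eq', ite_mul, mul_ite, one_mul, mul_one,
      zero_mul, mul_zero]
  -- integrability of products of X entries
  have hXXint : ∀ a s b t, Integrable (fun ω => X ω a s * X ω b t) μ := by
    intro a s b t
    have hrw : (fun ω => X ω a s * X ω b t)
        = (fun ω => Z ω (g a) (f s) * Z ω (g b) (f t))
          + (fun ω => Z ω (g a) (f s) * Γ ω b t)
          + (fun ω => Γ ω a s * Z ω (g b) (f t))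
          + (fun ω => Γ ω a s * Γ ω b t) := by
      funext ω
      simp only [Pi.add_apply]
      rw [hXentry, hXentry]
      ring
    rw [hrw]
    have hΓZ : Integrable (fun ω => Γ ω a s * Z ω (g b) (f t)) μ :=
      (hZΓint (g b) (f t) a s).congr (Filter.Eventually.of_forall fun ω => mul_comm _ _)
    exact (((hZint _ _ _ _).add (hZΓint _ _ _ _)).add hΓZ).add (hΓint _ _ _ _)
  -- second moments of X entries
  have hEXX : ∀ a s b t, a ≠ b →
      ∫ ω, X ω a s * X ω b t ∂μ = U (g a) (g b) * V (f s) (f t) := by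
    intro a s b t hab
    have hΓZ : Integrable (fun ω => Γ ω a s * Z ω (g b) (f t)) μ :=
      (hZΓint (g b) (f t) a s).congr (Filter.Eventually.of_forall fun ω => mul_comm _ _)
    calc ∫ ω, X ω a s * X ω b t ∂μ
        = ∫ ω, (Z ω (g a) (f s) * Z ω (g b) (f t) + Z ω (g a) (f s) * Γ ω b t
            + Γ ω a s * Z ω (g b) (f t) + Γ ω a s * Γ ω b t) ∂μ := by
          congr 1
          funext ω
          rw [hXentry, hXentry]
          ring
      _ = (∫ ω, (Z ω (g a) (f s) * Z ω (g b) (f t) + Z ω (g a) (f s) * Γ ω b t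
            + Γ ω a s * Z ω (g b) (f t)) ∂μ) + ∫ ω, Γ ω a s * Γ ω b t ∂μ :=
          integral_add (((hZint _ _ _ _).add (hZΓint _ _ _ _)).add hΓZ) (hΓint _ _ _ _)
      _ = ((∫ ω, (Z ω (g a) (f s) * Z ω (g b) (f t) + Z ω (g a) (f s) * Γ ω b t) ∂μ)
            + ∫ ω, Γ ω a s * Z ω (g b) (f t) ∂μ) + ∫ ω, Γ ω a s * Γ ω b t ∂μ := by
          congr 1
          exact integral_add ((hZint _ _ _ _).add (hZΓint _ _ _ _)) hΓZ
      _ = (((∫ ω, Z ω (g a) (f s) * Z ω (g b) (f t) ∂μ)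
            + ∫ ω, Z ω (g a) (f s) * Γ ω b t ∂μ)
            + ∫ ω, Γ ω a s * Z ω (g b) (f t) ∂μ) + ∫ ω, Γ ω a s * Γ ω b t ∂μ := by
          congr 2
          exact integral_add (hZint _ _ _ _) (hZΓint _ _ _ _)
      _ = U (g a) (g b) * V (f s) (f t) := by
          rw [hZcov, (hcross _ _ _ _).1, (hcross _ _ _ _).2, hΓΓ a s b t hab]
          ring
  -- off-diagonal entries of Σ
  have hSigOff : ∀ a b, a ≠ b → Sig a b = κ * U (g a) (g b) := by
    intro a b hab
    have hSab : Sig a b = ∫ ω, (X ω * W * (X ω)ᵀ) a b ∂μ := rfl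
    rw [hSab]
    have hval : ∀ ω, (X ω * W * (X ω)ᵀ) a b = ∑ s, ∑ t, W s t * (X ω a s * X ω b t) := by
      intro ω
      simp only [Matrix.mul_apply, Matrix.transpose_apply, Finset.sum_mul]
      rw [Finset.sum_comm]
      exact Finset.sum_congr rfl fun s _ => Finset.sum_congr rfl fun t _ => by ring
    simp_rw [hval]
    rw [integral_finset_sum _ (fun s _ =>
      integrable_finset_sum _ (fun t _ => ((hXXint a s b t).const_mul (W s t))))]
    have hS : ∀ s, (∫ ω, ∑ t, W s t * (X ω a s * X ω b t) ∂μ)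
        = ∑ t, W s t * (U (g a) (g b) * V (f s) (f t)) := by
      intro s
      rw [integral_finset_sum _ (fun t _ => ((hXXint a s b t).const_mul (W s t)))]
      exact Finset.sum_congr rfl fun t _ => by
        rw [integral_const_mul, hEXX a s b t hab]
    simp_rw [hS]
    calc ∑ s, ∑ t, W s t * (U (g a) (g b) * V (f s) (f t))
        = U (g a) (g b) * ∑ s, ∑ t, W s t * V (f s) (f t) := by
          rw [Finset.mul_sum]
          exact Finset.sum_congr rfl fun s _ => by
            rw [Finset.mul_sum]
            exact Finset.sum_congr rfl fun t _ => by ring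
      _ = κ * U (g a) (g b) := by rw [hc₀, hκdef]; ring
  -- main COD formula
  have main : ∀ w x : Fin p,
      (∀ k : Fin K₁, ∃ c, g c = k ∧ c ≠ w ∧ c ≠ x) →
      COD Sig w x = κ * ⨆ l, |U (g w) l - U (g x) l| := by
    intro w x hrep
    have hdiff : ∀ c, c ≠ w → c ≠ x →
        Sig w c - Sig x c = κ * (U (g w) (g c) - U (g x) (g c)) := by
      intro c hcw hcx
      rw [hSigOff w c (Ne.symm hcw), hSigOff x c (Ne.symm hcx)]
      ring
    have hRnn : 0 ≤ κ * ⨆ l, |U (g w) l - U (g x) l| := by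
      refine mul_nonneg hκ ?_
      have h1 : |U (g w) (Classical.arbitrary (Fin K₁)) - U (g x) (Classical.arbitrary (Fin K₁))|
          ≤ ⨆ l, |U (g w) l - U (g x) l| :=
        le_ciSup (Finite.bddAbove_range fun l => |U (g w) l - U (g x) l|)
          (Classical.arbitrary (Fin K₁))
      exact le_trans (abs_nonneg _) h1
    unfold COD
    haveI : Nonempty (Fin p) := ⟨w⟩
    apply le_antisymm
    · apply ciSup_le
      intro c
      by_cases hc : c ≠ w ∧ c ≠ x
      · rw [ciSup_pos hc, hdiff c hc.1 hc.2, abs_mul, abs_of_nonneg hκ]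
        exact mul_le_mul_of_nonneg_left
          (le_ciSup (Finite.bddAbove_range fun l => |U (g w) l - U (g x) l|) (g c)) hκ
      · haveI : IsEmpty (c ≠ w ∧ c ≠ x) := ⟨hc⟩
        rw [Real.iSup_of_isEmpty]
        exact hRnn
    · rw [Real.mul_iSup_of_nonneg hκ]
      apply ciSup_le
      intro l
      obtain ⟨c, hgc, hcw, hcx⟩ := hrep l
      have heq : κ * |U (g w) l - U (g x) l| = |Sig w c - Sig x c| := by
        rw [hdiff c hcw hcx, abs_mul, abs_of_nonneg hκ, hgc]
      rw [heq]
      have hcp : c ≠ w ∧ c ≠ x := ⟨hcw, hcx⟩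
      calc |Sig w c - Sig x c|
          = ⨆ _ : (c ≠ w ∧ c ≠ x), |Sig w c - Sig x c| :=
            (ciSup_pos (f := fun _ => |Sig w c - Sig x c|) hcp).symm
        _ ≤ ⨆ c, ⨆ _ : (c ≠ w ∧ c ≠ x), |Sig w c - Sig x c| :=
            le_ciSup (Finite.bddAbove_range
              fun c => ⨆ _ : (c ≠ w ∧ c ≠ x), |Sig w c - Sig x c|) c
  have hsame : ∀ w x, SameCluster A w x ↔ g w = g x := by
    intro w x
    constructor
    · rintro ⟨k, h1, h2⟩
      rw [hgA w k h1, hgA x k h2]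
    · intro h
      exact ⟨g w, by simp [hg], by simp [hg, h]⟩
  constructor
  · -- part (i)
    intro w x i h hwx hwi hxh hrep'
    have hrep : ∀ k : Fin K₁, ∃ c, g c = k ∧ c ≠ w ∧ c ≠ x := by
      intro k
      obtain ⟨c, h1, h2, h3⟩ := hrep' k
      exact ⟨c, hgA c k h1, h2, h3⟩
    rw [main w x hrep, hgA w i hwi, hgA x h hxh]
  · -- part (ii)
    intro htwo hK₁
    have hrep2 : ∀ w x : Fin p, g w ≠ g x →
        ∀ k : Fin K₁, ∃ c, g c = k ∧ c ≠ w ∧ c ≠ x := by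
      intro w x hne k
      obtain ⟨c, d, hcd, hc, hd⟩ := htwo k
      have hgc := hgA c k hc
      have hgd := hgA d k hd
      by_cases hcw : c = w
      · subst hcw
        refine ⟨d, hgd, fun h => hcd h.symm, ?_⟩
        intro h
        apply hne
        have hx : g x = k := by rw [← h]; exact hgd
        exact hgc.trans hx.symm
      · by_cases hcx : c = x
        · subst hcx
          refine ⟨d, hgd, ?_, fun h => hcd h.symm⟩
          intro h
          apply hne
          have hw : g w = k := by rw [← h]; exact hgd
          exact hw.trans hgc.symm
        · exact ⟨c, hgc, hcw, hcx⟩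
    have main2 : ∀ w x : Fin p, g w ≠ g x →
        COD Sig w x = κ * ⨆ l, |U (g w) l - U (g x) l| :=
      fun w x hne => main w x (hrep2 w x hne)
    have hgne : ∀ ab : {ab : Fin p × Fin p // ¬ SameCluster A ab.1 ab.2},
        g ab.1.1 ≠ g ab.1.2 := fun ab h => ab.2 ((hsame _ _).mpr h)
    have h0 : 0 < K₁ := by omega
    have h1 : 1 < K₁ := by omega
    have hi01 : (⟨0, h0⟩ : Fin K₁) ≠ ⟨1, h1⟩ := by
      intro h; simpa using congrArg Fin.val h
    haveI n1 : Nonempty {ih : Fin K₁ × Fin K₁ // ih.1 ≠ ih.2} := ⟨⟨(⟨0, h0⟩, ⟨1, h1⟩), hi01⟩⟩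
    obtain ⟨w0, hw0⟩ := hA.2.2 ⟨0, h0⟩
    obtain ⟨x0, hx0⟩ := hA.2.2 ⟨1, h1⟩
    haveI n2 : Nonempty {ab : Fin p × Fin p // ¬ SameCluster A ab.1 ab.2} := by
      refine ⟨⟨(w0, x0), fun hsc => hi01 ?_⟩⟩
      rw [← hgA w0 _ hw0, ← hgA x0 _ hx0]
      exact (hsame w0 x0).mp hsc
    unfold MCOD
    rw [Real.mul_iInf_of_nonneg hκ]
    apply le_antisymm
    · apply le_ciInf
      intro ih
      obtain ⟨w, hw⟩ := hA.2.2 ih.1.1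
      obtain ⟨x, hx⟩ := hA.2.2 ih.1.2
      have hgw : g w = ih.1.1 := hgA w _ hw
      have hgx : g x = ih.1.2 := hgA x _ hx
      have hne : ¬ SameCluster A w x := by
        intro hsc
        exact ih.2 (by rw [← hgw, ← hgx]; exact (hsame w x).mp hsc)
      have hle : (⨅ ab : {ab : Fin p × Fin p // ¬ SameCluster A ab.1 ab.2},
            COD Sig ab.1.1 ab.1.2) ≤ COD Sig w x :=
        ciInf_le (Finite.bddBelow_range _) (⟨(w, x), hne⟩ :
          {ab : Fin p × Fin p // ¬ SameCluster A ab.1 ab.2})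
      refine le_trans hle ?_
      rw [main2 w x (by rw [hgw, hgx]; exact ih.2), hgw, hgx]
    · apply le_ciInf
      intro ab
      have h2 : (⨅ ih : {ih : Fin K₁ × Fin K₁ // ih.1 ≠ ih.2},
            κ * ⨆ l, |U ih.1.1 l - U ih.1.2 l|)
          ≤ κ * ⨆ l, |U (g ab.1.1) l - U (g ab.1.2) l| :=
        ciInf_le (Finite.bddBelow_range _) (⟨(g ab.1.1, g ab.1.2), hgne ab⟩ : {ih : Fin K₁ × Fin K₁ // ih.1 ≠ ih.2})
      exact le_trans h2 (le_of_eq (main2 ab.1.1 ab.1.2 (hgne ab)).symm)
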